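/- Let n, p ≥ 1, r > 0, let P_oo be a symmetric positive semidefinite n×n real matrix, P_ōo a 2×n real matrix, P_ōō a symmetric 2×2 real matrix, C_o a p×n real matrix, and set P̆ := [[P_oo, P_ōoᵀ], [P_ōo, P_ōō]], C̃ := [C_o, 0_{p×2}], S := C_o·P_oo·C_oᵀ + r·I_p. Then S is symmetric positive definite (hence invertible), and with L_o := P_oo·C_oᵀ·S⁻¹ and L_ō := P_ōo·C_oᵀ·S⁻¹ one has: (i) P̆·C̃ᵀ = [P_oo·C_oᵀ; P_ōo·C_oᵀ] and C̃·P̆·C̃ᵀ = C_o·P_oo·C_oᵀ, so P̆·C̃ᵀ·(C̃·P̆·C̃ᵀ + rI_p)⁻¹ = [L_o; L_ō]; (ii) the (1,1) block of (I_{n+2} − [L_o; L_ō]·C̃)·P̆ equals (I_n − L_o·C_o)·P_oo and its (2,1) block equals P_ōo·(I_n − C_oᵀ·L_oᵀ). -/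

import Mathlib

open Matrix

/-- Lemma 1 of the paper (measurement-update step): the Kalman gains and the posterior
covariance blocks `P_oo`, `P_ōo` do not depend on the unobservable block `P_ōō`. -/
theorem stmt_11 (n p : ℕ) (hn : 1 ≤ n) (hp : 1 ≤ p) (r : ℝ) (hr : 0 < r)
    (Poo : Matrix (Fin n) (Fin n) ℝ) (hPoo : Poo.PosSemidef)
    (Pbo : Matrix (Fin 2) (Fin n) ℝ)
    (Pbb : Matrix (Fin 2) (Fin 2) ℝ) (hPbb : Pbb.IsSymm)
    (Co : Matrix (Fin p) (Fin n) ℝ)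
    (Pbrev : Matrix (Fin n ⊕ Fin 2) (Fin n ⊕ Fin 2) ℝ)
    (hPbrev : Pbrev = Matrix.fromBlocks Poo Pboᵀ Pbo Pbb)
    (Ctil : Matrix (Fin p) (Fin n ⊕ Fin 2) ℝ)
    (hCtil : Ctil = Matrix.fromCols Co 0)
    (S : Matrix (Fin p) (Fin p) ℝ)
    (hS : S = Co * Poo * Coᵀ + r • (1 : Matrix (Fin p) (Fin p) ℝ))
    (Lo : Matrix (Fin n) (Fin p) ℝ) (hLo : Lo = Poo * Coᵀ * S⁻¹)
    (Lb : Matrix (Fin 2) (Fin p) ℝ) (hLb : Lb = Pbo * Coᵀ * S⁻¹) :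
    S.PosDef ∧ IsUnit S ∧
    Pbrev * Ctilᵀ = Matrix.fromRows (Poo * Coᵀ) (Pbo * Coᵀ) ∧
    Ctil * Pbrev * Ctilᵀ = Co * Poo * Coᵀ ∧
    Pbrev * Ctilᵀ * (Ctil * Pbrev * Ctilᵀ + r • (1 : Matrix (Fin p) (Fin p) ℝ))⁻¹ =
      Matrix.fromRows Lo Lb ∧
    ((1 - Matrix.fromRows Lo Lb * Ctil) * Pbrev).toBlocks₁₁ = (1 - Lo * Co) * Poo ∧
    ((1 - Matrix.fromRows Lo Lb * Ctil) * Pbrev).toBlocks₂₁ = Pbo * (1 - Coᵀ * Loᵀ) := by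
  have hPooT : Pooᵀ = Poo := hPoo.isHermitian.eq
  have hrI : (r • (1 : Matrix (Fin p) (Fin p) ℝ)).PosDef := by
    rw [Matrix.smul_one_eq_diagonal]
    exact Matrix.posDef_diagonal_iff.mpr fun _ => hr
  have hSpd : S.PosDef := by
    rw [hS]
    exact Matrix.PosDef.posSemidef_add (hPoo.mul_mul_conjTranspose_same Co) hrI
  have hSunit : IsUnit S := hSpd.isUnit
  have hST : Sᵀ = S := hSpd.isHermitian.eq
  have hSinvT : S⁻¹ᵀ = S⁻¹ := by
    rw [Matrix.transpose_nonsing_inv, hST]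
  have h1 : Pbrev * Ctilᵀ = Matrix.fromRows (Poo * Coᵀ) (Pbo * Coᵀ) := by
    rw [hPbrev, hCtil, transpose_fromCols, fromBlocks_mul_fromRows]
    simp
  have h2 : Ctil * Pbrev * Ctilᵀ = Co * Poo * Coᵀ := by
    rw [Matrix.mul_assoc, h1, hCtil, fromCols_mul_fromRows]
    simp [Matrix.mul_assoc]
  have h3 : Pbrev * Ctilᵀ * (Ctil * Pbrev * Ctilᵀ + r • (1 : Matrix (Fin p) (Fin p) ℝ))⁻¹ =
      Matrix.fromRows Lo Lb := by
    rw [h1, h2, ← hS, fromRows_mul, hLo, hLb]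
  have hkey : 1 - Matrix.fromRows Lo Lb * Ctil =
      fromBlocks (1 - Lo * Co) 0 (-(Lb * Co)) 1 := by
    rw [hCtil, fromRows_mul_fromCols]
    ext (i|i) (j|j) <;> simp [fromBlocks, one_apply]
  refine ⟨hSpd, hSunit, h1, h2, h3, ?_, ?_⟩
  · rw [hkey, hPbrev, fromBlocks_multiply, toBlocks_fromBlocks₁₁]
    simp
  · rw [hkey, hPbrev, fromBlocks_multiply, toBlocks_fromBlocks₂₁]
    have hfin : Lb * Co * Poo = Pbo * (Coᵀ * Loᵀ) := by
      rw [hLb, hLo]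
      simp only [Matrix.transpose_mul, Matrix.transpose_transpose, hSinvT, hPooT,
        Matrix.mul_assoc]
    rw [Matrix.mul_sub, Matrix.mul_one, ← hfin]
    simp only [Matrix.neg_mul, Matrix.one_mul]
    abel
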